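/- Let k be a field of characteristic 2 with a ∈ k, a ≠ 0. In the rational function field k(x,y), set u = x^2, v = y^2, z = a x^7 + x^5 y + x^3 y + x y^7. Then z^2 = a^2 u^7 + u^5 v + u^3 v + u v^7, and for the derivation D = (1/x^5)·(x(x^4 + x^2 + y^6) ∂/∂x + (a x^6 + y(x^4 + x^2 + y^6)) ∂/∂y), one has D(u) = D(v) = D(z) = 0. -/

import Mathlib

open MvPolynomial

/-- In `k(x,y)` (char 2) with `a ≠ 0`, for `u = x²`, `v = y²`,
`z = ax⁷ + x⁵y + x³y + xy⁷` one has `z² = a²u⁷ + u⁵v + u³v + uv⁷`; and for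
`D = (1/x⁵)(x(x⁴+x²+y⁶)∂/∂x + (ax⁶ + y(x⁴+x²+y⁶))∂/∂y)` one has `D u = D v = D z = 0`. -/
theorem D8_supersingular_invariants (k : Type*) [Field k] [CharP k 2]
    (a : k) (ha : a ≠ 0)
    (K : Type*) [Field K] [Algebra (MvPolynomial (Fin 2) k) K]
    [IsFractionRing (MvPolynomial (Fin 2) k) K]
    [Algebra k K] [IsScalarTower k (MvPolynomial (Fin 2) k) K]
    (x y : K)
    (hx : x = algebraMap (MvPolynomial (Fin 2) k) K (X 0))
    (hy : y = algebraMap (MvPolynomial (Fin 2) k) K (X 1))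
    (D : Derivation k K K)
    (hDx : D x = (x * (x ^ 4 + x ^ 2 + y ^ 6)) / x ^ 5)
    (hDy : D y = (algebraMap k K a * x ^ 6 + y * (x ^ 4 + x ^ 2 + y ^ 6)) / x ^ 5) :
    (algebraMap k K a * x ^ 7 + x ^ 5 * y + x ^ 3 * y + x * y ^ 7) ^ 2 =
        (algebraMap k K a) ^ 2 * (x ^ 2) ^ 7 + (x ^ 2) ^ 5 * (y ^ 2)
          + (x ^ 2) ^ 3 * (y ^ 2) + (x ^ 2) * (y ^ 2) ^ 7 ∧
      D (x ^ 2) = 0 ∧ D (y ^ 2) = 0 ∧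
      D (algebraMap k K a * x ^ 7 + x ^ 5 * y + x ^ 3 * y + x * y ^ 7) = 0 := by
  haveI : CharP K 2 := charP_of_injective_algebraMap (algebraMap k K).injective 2
  have h2 : (2 : K) = 0 := by exact_mod_cast CharP.cast_eq_zero K 2
  have hx0 : x ≠ 0 := by
    rw [hx]
    simpa using (IsFractionRing.injective (MvPolynomial (Fin 2) k) K).ne
      (X_ne_zero 0 : (X 0 : MvPolynomial (Fin 2) k) ≠ 0)
  refine ⟨?_, ?_, ?_, ?_⟩
  · linear_combination (algebraMap k K a * x ^ 7 * (x ^ 5 * y) + algebraMap k K a * x ^ 7 * (x ^ 3 * y)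
      + algebraMap k K a * x ^ 7 * (x * y ^ 7) + x ^ 5 * y * (x ^ 3 * y) + x ^ 5 * y * (x * y ^ 7)
      + x ^ 3 * y * (x * y ^ 7)) * h2
  · rw [sq, Derivation.leibniz, smul_eq_mul]
    linear_combination x * D x * h2
  · rw [sq, Derivation.leibniz, smul_eq_mul]
    linear_combination y * D y * h2
  · simp only [map_add, Derivation.leibniz, Derivation.leibniz_pow, Derivation.map_algebraMap,
      smul_eq_mul, nsmul_eq_mul, smul_zero, mul_zero, zero_add, add_zero]
    rw [hDx, hDy]
    field_simp
    linear_combination (7*(algebraMap k K) a * x ^ 6 * y ^ 6 + 4*(algebraMap k K) a * x ^ 8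
      + 4*(algebraMap k K) a * x ^ 10 + 4*y ^ 13 + 6*x ^ 2 * y ^ 7 + 2*x ^ 4 * y
      + 7*x ^ 4 * y ^ 7 + 5*x ^ 6 * y + 3*x ^ 8 * y) * h2
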